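/- For q ≥ 1 and jointly distributed finite-valued random variables X₁,...,Xₙ, the joint Tsallis entropy is bounded above by the sum of the marginal Tsallis entropies: Hᵀ_q(X₁,...,Xₙ) ≤ ∑ᵢ Hᵀ_q(Xᵢ). -/

import Mathlib

/-- Tsallis entropy of order `q` of a probability mass function on a finite set
(Shannon entropy for `q = 1`). -/
noncomputable def tsallisPMF (q : ℝ) {S : Type*} [Fintype S] (p : S → ℝ) : ℝ :=
  if q = 1 then -∑ x, p x * Real.log (p x) else ((∑ x, p x ^ q) - 1) / (1 - q)

open Finset

private lemma rpow_le_self' {x q : ℝ} (hx : 0 ≤ x) (hx1 : x ≤ 1) (hq : 1 ≤ q) :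
    x ^ q ≤ x := by
  rcases eq_or_lt_of_le hx with h | h
  · rw [← h, Real.zero_rpow (by linarith)]
  · calc x ^ q ≤ x ^ (1 : ℝ) := Real.rpow_le_rpow_of_exponent_ge h hx1 hq
    _ = x := Real.rpow_one x

private lemma shannon_core {α β : Type*} [Fintype α] [Fintype β]
    (p : α × β → ℝ) (hp : ∀ z, 0 ≤ p z) (h1 : ∑ z, p z = 1) :
    -∑ z, p z * Real.log (p z) ≤
      (-∑ a, (∑ b, p (a, b)) * Real.log (∑ b, p (a, b)))
      + (-∑ b, (∑ a, p (a, b)) * Real.log (∑ a, p (a, b))) := by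
  set pX : α → ℝ := fun a => ∑ b, p (a, b) with hpXdef
  set pY : β → ℝ := fun b => ∑ a, p (a, b) with hpYdef
  have hpX0 : ∀ a, 0 ≤ pX a := fun a => Finset.sum_nonneg fun b _ => hp _
  have hpY0 : ∀ b, 0 ≤ pY b := fun b => Finset.sum_nonneg fun a _ => hp _
  have hXsum : ∑ a, pX a = 1 := by rw [← h1, Fintype.sum_prod_type]
  have hYsum : ∑ b, pY b = 1 := by rw [← h1, Fintype.sum_prod_type_right]
  have hXge : ∀ z : α × β, p z ≤ pX z.1 := by
    intro z
    have := Finset.single_le_sum (f := fun b => p (z.1, b))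
      (fun b _ => hp _) (Finset.mem_univ z.2)
    simpa using this
  have hYge : ∀ z : α × β, p z ≤ pY z.2 := by
    intro z
    have := Finset.single_le_sum (f := fun a => p (a, z.2))
      (fun a _ => hp _) (Finset.mem_univ z.1)
    simpa using this
  have key : ∀ z : α × β,
      p z * (Real.log (pX z.1) + Real.log (pY z.2)) - p z * Real.log (p z)
        ≤ pX z.1 * pY z.2 - p z := by
    intro z
    rcases eq_or_lt_of_le (hp z) with h | h
    · rw [← h]
      simp [mul_nonneg (hpX0 z.1) (hpY0 z.2)]
    · have hX : 0 < pX z.1 := lt_of_lt_of_le h (hXge z)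
      have hY : 0 < pY z.2 := lt_of_lt_of_le h (hYge z)
      have hr : 0 < pX z.1 * pY z.2 := mul_pos hX hY
      have hlog : Real.log (pX z.1) + Real.log (pY z.2) - Real.log (p z)
          = Real.log (pX z.1 * pY z.2 / p z) := by
        rw [Real.log_div (ne_of_gt hr) (ne_of_gt h), Real.log_mul (ne_of_gt hX) (ne_of_gt hY)]
      have hle := Real.log_le_sub_one_of_pos (div_pos hr h)
      have := mul_le_mul_of_nonneg_left hle (le_of_lt h)
      have hcancel : p z * (pX z.1 * pY z.2 / p z) = pX z.1 * pY z.2 := by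
        field_simp
      nlinarith [this, hcancel, hlog]
  have total : ∑ z, (p z * (Real.log (pX z.1) + Real.log (pY z.2)) - p z * Real.log (p z))
      ≤ ∑ z : α × β, (pX z.1 * pY z.2 - p z) :=
    Finset.sum_le_sum fun z _ => key z
  have hrsum : ∑ z : α × β, pX z.1 * pY z.2 = 1 := by
    rw [Fintype.sum_prod_type]
    simp only [← Finset.mul_sum]
    rw [hYsum]
    simpa using hXsum
  have eX : ∑ a, pX a * Real.log (pX a) = ∑ z : α × β, p z * Real.log (pX z.1) := by
    rw [Fintype.sum_prod_type]
    refine Finset.sum_congr rfl fun a _ => ?_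
    rw [Finset.sum_mul]
  have eY : ∑ b, pY b * Real.log (pY b) = ∑ z : α × β, p z * Real.log (pY z.2) := by
    rw [Fintype.sum_prod_type_right]
    refine Finset.sum_congr rfl fun b _ => ?_
    rw [Finset.sum_mul]
  have expand : ∑ z, (p z * (Real.log (pX z.1) + Real.log (pY z.2)) - p z * Real.log (p z))
      = (∑ z : α × β, p z * Real.log (pX z.1)) + (∑ z : α × β, p z * Real.log (pY z.2))
        - ∑ z, p z * Real.log (p z) := by
    rw [Finset.sum_sub_distrib, ← Finset.sum_add_distrib]
    congr 1
    refine Finset.sum_congr rfl fun z _ => ?_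
    ring
  have expand2 : ∑ z : α × β, (pX z.1 * pY z.2 - p z) = 0 := by
    rw [Finset.sum_sub_distrib, hrsum, h1]
    ring
  rw [expand, expand2] at total
  rw [eX, eY]
  linarith

private lemma pow_core {α β : Type*} [Fintype α] [Fintype β]
    (q : ℝ) (hq : 1 ≤ q) (p : α × β → ℝ) (hp : ∀ z, 0 ≤ p z) (h1 : ∑ z, p z = 1) :
    (∑ a, (∑ b, p (a, b)) ^ q) + (∑ b, (∑ a, p (a, b)) ^ q)
      ≤ 1 + ∑ z, p z ^ q := by
  set pX : α → ℝ := fun a => ∑ b, p (a, b) with hpXdef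
  set pY : β → ℝ := fun b => ∑ a, p (a, b) with hpYdef
  set c : α → β → ℝ := fun a b => p (a, b) / pX a with hcdef
  set S : α → ℝ := fun a => ∑ b, c a b ^ q with hSdef
  have hpX0 : ∀ a, 0 ≤ pX a := fun a => Finset.sum_nonneg fun b _ => hp _
  have hXsum : ∑ a, pX a = 1 := by rw [← h1, Fintype.sum_prod_type]
  have hpX1 : ∀ a, pX a ≤ 1 := by
    intro a
    rw [← hXsum]
    exact Finset.single_le_sum (fun a' _ => hpX0 a') (Finset.mem_univ a)
  have hple : ∀ a b, p (a, b) ≤ pX a := by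
    intro a b
    exact Finset.single_le_sum (f := fun b' => p (a, b'))
      (fun b' _ => hp _) (Finset.mem_univ b)
  have hc0 : ∀ a b, 0 ≤ c a b := fun a b => div_nonneg (hp _) (hpX0 a)
  have hc1 : ∀ a b, c a b ≤ 1 := fun a b => div_le_one_of_le₀ (hple a b) (hpX0 a)
  have hrec : ∀ a b, p (a, b) = pX a * c a b := by
    intro a b
    by_cases h : pX a = 0
    · have hz : p (a, b) = 0 := le_antisymm (h ▸ hple a b) (hp _)
      simp [hcdef, hz, h]
    · simp only [hcdef]
      field_simp
  have hS0 : ∀ a, 0 ≤ S a :=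
    fun a => Finset.sum_nonneg fun b _ => Real.rpow_nonneg (hc0 a b) q
  have hS1 : ∀ a, S a ≤ 1 := by
    intro a
    have h2 : ∑ b, c a b ≤ 1 := by
      by_cases h : pX a = 0
      · have : ∀ b, c a b = 0 := by intro b; simp [hcdef, h]
        simp [this]
      · have : ∑ b, c a b = pX a / pX a := by
          rw [← Finset.sum_div]
        rw [this, div_self h]
    calc S a ≤ ∑ b, c a b := Finset.sum_le_sum fun b _ => rpow_le_self' (hc0 a b) (hc1 a b) hq
      _ ≤ 1 := h2
  have hjoint : ∑ z, p z ^ q = ∑ a, pX a ^ q * S a := by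
    rw [Fintype.sum_prod_type]
    refine Finset.sum_congr rfl fun a _ => ?_
    rw [hSdef]
    simp only []
    rw [Finset.mul_sum]
    refine Finset.sum_congr rfl fun b _ => ?_
    rw [hrec a b, Real.mul_rpow (hpX0 a) (hc0 a b)]
  have hY : ∀ b, pY b ^ q ≤ ∑ a, pX a * c a b ^ q := by
    intro b
    have hYrw : pY b = ∑ a, pX a * c a b := by
      rw [hpYdef]
      exact Finset.sum_congr rfl fun a _ => hrec a b
    rw [hYrw]
    exact Real.rpow_arith_mean_le_arith_mean_rpow Finset.univ pX (fun a => c a b)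
      (fun a _ => hpX0 a) hXsum (fun a _ => hc0 a b) hq
  have hY2 : ∑ b, pY b ^ q ≤ ∑ a, pX a * S a := by
    calc ∑ b, pY b ^ q ≤ ∑ b, ∑ a, pX a * c a b ^ q :=
          Finset.sum_le_sum fun b _ => hY b
      _ = ∑ a, ∑ b, pX a * c a b ^ q := Finset.sum_comm
      _ = ∑ a, pX a * S a := by
          refine Finset.sum_congr rfl fun a _ => ?_
          rw [hSdef]
          simp only []
          rw [Finset.mul_sum]
  have main : ∑ a, (pX a - pX a ^ q) * S a ≤ ∑ a, (pX a - pX a ^ q) := by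
    refine Finset.sum_le_sum fun a _ => ?_
    have hfac : 0 ≤ pX a - pX a ^ q :=
      sub_nonneg.mpr (rpow_le_self' (hpX0 a) (hpX1 a) hq)
    calc (pX a - pX a ^ q) * S a ≤ (pX a - pX a ^ q) * 1 :=
          mul_le_mul_of_nonneg_left (hS1 a) hfac
      _ = pX a - pX a ^ q := mul_one _
  have e1 : ∑ a, (pX a - pX a ^ q) * S a
      = ∑ a, pX a * S a - ∑ a, pX a ^ q * S a := by
    rw [← Finset.sum_sub_distrib]
    exact Finset.sum_congr rfl fun a _ => by ring
  have e2 : ∑ a, (pX a - pX a ^ q) = 1 - ∑ a, pX a ^ q := by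
    rw [Finset.sum_sub_distrib, hXsum]
  rw [e1, e2] at main
  rw [hjoint]
  linarith

private lemma tsallis_core {α β : Type*} [Fintype α] [Fintype β]
    (q : ℝ) (hq : 1 ≤ q) (p : α × β → ℝ) (hp : ∀ z, 0 ≤ p z) (h1 : ∑ z, p z = 1) :
    tsallisPMF q p
      ≤ tsallisPMF q (fun a => ∑ b, p (a, b)) + tsallisPMF q (fun b => ∑ a, p (a, b)) := by
  rcases eq_or_lt_of_le hq with h | h
  · simp only [tsallisPMF, ← h, if_pos rfl]
    exact shannon_core p hp h1
  · have hne : q ≠ 1 := (ne_of_gt h)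
    simp only [tsallisPMF, if_neg hne]
    have hcore := pow_core q hq p hp h1
    have h1q : 1 - q < 0 := by linarith
    rw [← add_div, div_le_div_right_of_neg h1q]
    linarith

private lemma tsallis_comp (q : ℝ) {S T : Type*} [Fintype S] [Fintype T]
    (e : S ≃ T) (p : T → ℝ) :
    tsallisPMF q (fun s => p (e s)) = tsallisPMF q p := by
  simp only [tsallisPMF]
  rw [Equiv.sum_comp e (fun t => p t ^ q),
    Equiv.sum_comp e (fun t => p t * Real.log (p t))]

universe u

private lemma tsallis_aux (q : ℝ) (hq : 1 ≤ q) :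
    ∀ (n : ℕ) (F : Fin n → Type u) (inst : ∀ i, Fintype (F i))
      (instD : ∀ i, DecidableEq (F i)) (p : (∀ i, F i) → ℝ),
      (∀ y, 0 ≤ p y) → (∑ y, p y) = 1 →
      tsallisPMF q p
        ≤ ∑ i, tsallisPMF q (fun x : F i => ∑ y : (∀ j, F j), if y i = x then p y else 0) := by
  intro n
  induction n with
  | zero =>
    intro F inst instD p hp hsum
    have hone : p default = 1 := by
      rw [Fintype.sum_unique] at hsum
      exact hsum
    have : tsallisPMF q p = 0 := by
      simp [tsallisPMF, Fintype.sum_unique, hone, Real.one_rpow]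
    simp [this]
  | succ n ih =>
    intro F inst instD p hp hsum
    set e : (F 0 × ∀ i : Fin n, F i.succ) ≃ (∀ i, F (i : Fin (n + 1))) := Fin.consEquiv F with hedef
    set P : F 0 × (∀ i : Fin n, F i.succ) → ℝ := fun z => p (e z) with hPdef
    have he : ∀ (a : F 0) (b : ∀ i : Fin n, F i.succ), e (a, b) = Fin.cons a b := fun a b => rfl
    have hP0 : ∀ z, 0 ≤ P z := fun z => hp _
    have hPsum : ∑ z, P z = 1 := by
      rw [hPdef, Equiv.sum_comp e p, hsum]
    have hcomp : tsallisPMF q p = tsallisPMF q P := (tsallis_comp q e p).symm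
    have hcore := tsallis_core q hq P hP0 hPsum
    -- identify the first marginal
    have hm0 : (fun x : F 0 => ∑ b, P (x, b))
        = fun x : F 0 => ∑ y : (∀ j, F j), if y 0 = x then p y else 0 := by
      funext x
      rw [← Equiv.sum_comp e (fun y => if y 0 = x then p y else 0)]
      rw [Fintype.sum_prod_type]
      symm
      have : ∀ (a : F 0) (b : ∀ i : Fin n, F i.succ),
          (if (e (a, b)) 0 = x then p (e (a, b)) else 0)
            = if a = x then P (a, b) else 0 := by
        intro a b
        rw [he a b, Fin.cons_zero]
        rfl
      calc (∑ a, ∑ b, if (e (a, b)) 0 = x then p (e (a, b)) else 0)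
          = ∑ a, ∑ b, if a = x then P (a, b) else 0 := by
            refine Finset.sum_congr rfl fun a _ => Finset.sum_congr rfl fun b _ => this a b
        _ = ∑ a, if a = x then ∑ b, P (a, b) else 0 := by
            refine Finset.sum_congr rfl fun a _ => ?_
            split <;> simp
        _ = ∑ b, P (x, b) := by rw [Finset.sum_ite_eq' Finset.univ x (fun a => ∑ b, P (a, b))]; simp
      -- directions
    -- the rest marginal distribution
    set Q : (∀ i : Fin n, F i.succ) → ℝ := fun b => ∑ a, P (a, b) with hQdef
    have hQ0 : ∀ b, 0 ≤ Q b := fun b => Finset.sum_nonneg fun a _ => hP0 _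
    have hQsum : ∑ b, Q b = 1 := by
      rw [hQdef, ← Fintype.sum_prod_type_right]
      exact hPsum
    have hrest := ih (fun i => F i.succ) (fun i => inst i.succ) (fun i => instD i.succ)
      Q hQ0 hQsum
    -- identify the marginals of Q with those of p
    have hmQ : ∀ i : Fin n, (fun x : F i.succ => ∑ b : (∀ j : Fin n, F j.succ),
        if b i = x then Q b else 0)
          = fun x : F i.succ => ∑ y : (∀ j, F j), if y i.succ = x then p y else 0 := by
      intro i
      funext x
      rw [← Equiv.sum_comp e (fun y => if y i.succ = x then p y else 0)]
      rw [Fintype.sum_prod_type_right]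
      symm
      refine Finset.sum_congr rfl fun b _ => ?_
      have : ∀ a : F 0, (if (e (a, b)) i.succ = x then p (e (a, b)) else 0)
          = if b i = x then P (a, b) else 0 := by
        intro a
        rw [he a b, Fin.cons_succ]
        rfl
      calc (∑ a, if (e (a, b)) i.succ = x then p (e (a, b)) else 0)
          = ∑ a, if b i = x then P (a, b) else 0 := Finset.sum_congr rfl fun a _ => this a
        _ = (if b i = x then Q b else 0) := by split <;> simp [hQdef]
    rw [Fin.sum_univ_succ]
    rw [hcomp]
    calc tsallisPMF q P
        ≤ tsallisPMF q (fun a => ∑ b, P (a, b)) + tsallisPMF q Q := hcore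
      _ ≤ tsallisPMF q (fun a => ∑ b, P (a, b))
          + ∑ i : Fin n, tsallisPMF q (fun x : F i.succ => ∑ b : (∀ j : Fin n, F j.succ),
              if b i = x then Q b else 0) := by linarith
      _ = tsallisPMF q (fun x : F 0 => ∑ y : (∀ j, F j), if y 0 = x then p y else 0)
          + ∑ i : Fin n, tsallisPMF q
              (fun x : F i.succ => ∑ y : (∀ j, F j), if y i.succ = x then p y else 0) := by
            rw [hm0]
            congr 1
            exact Finset.sum_congr rfl fun i _ => by rw [hmQ i]

/-- Subadditivity: for `q ≥ 1`, the joint Tsallis entropy is at most the sum of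
the marginal Tsallis entropies. -/
theorem tsallis_joint_le_sum_marginals {n : ℕ} {F : Fin n → Type*}
    [∀ i, Fintype (F i)] [∀ i, DecidableEq (F i)]
    (p : (∀ i, F i) → ℝ) (hp : ∀ y, 0 ≤ p y) (hsum : ∑ y, p y = 1)
    (q : ℝ) (hq : 1 ≤ q) :
    tsallisPMF q p
      ≤ ∑ i, tsallisPMF q (fun x : F i => ∑ y : (∀ j, F j), if y i = x then p y else 0) := by
  exact tsallis_aux q hq n F inferInstance inferInstance p hp hsum
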